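/- For any Lorentz transformation A (a real 4×4 matrix), there exists a unique pair (v, O) with v ∈ ℝ³, |v| < 1, and O ∈ SO(3,ℝ), such that, setting γ = 1/√(1 − |v|²), A equals the 4×4 block matrix with top-left 1×1 block ε₁γ, top-right 1×3 block ε₁γ·vᵀO, bottom-left 3×1 block ε₂γ·v, and bottom-right 3×3 block ε₂·(I₃ + (γ²/(1+γ))·v vᵀ)·O, where ε₁ = 1 if A is orthochronous and ε₁ = −1 otherwise, and ε₂ = −1 if exactly one of the two properties 'A is proper' and 'A is orthochronous' holds, ε₂ = 1 otherwise. -/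

import Mathlib

/-- The Minkowski quadratic form on ℝ⁴: q(t,x,y,z) = x² + y² + z² − t². -/
def mink (x : Fin 4 → ℝ) : ℝ := (x 1)^2 + (x 2)^2 + (x 3)^2 - (x 0)^2

/-- A real 4×4 matrix is a Lorentz transformation if it preserves the Minkowski form. -/
def IsLorentz (A : Matrix (Fin 4) (Fin 4) ℝ) : Prop :=
  ∀ x : Fin 4 → ℝ, mink (A.mulVec x) = mink x

/-- A Lorentz transformation is proper if its determinant is positive. -/
def IsProper (A : Matrix (Fin 4) (Fin 4) ℝ) : Prop := 0 < A.det

/-- A Lorentz transformation is orthochronous if it preserves the sign of the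
time component of every timelike vector. -/
def IsOrthochronous (A : Matrix (Fin 4) (Fin 4) ℝ) : Prop :=
  ∀ x : Fin 4 → ℝ, (x 1)^2 + (x 2)^2 + (x 3)^2 < (x 0)^2 →
    Real.sign (A.mulVec x 0) = Real.sign (x 0)

/-- Membership in SO(3,ℝ). -/
def SO3 (O : Matrix (Fin 3) (Fin 3) ℝ) : Prop := O.transpose * O = 1 ∧ O.det = 1

/-- Squared Euclidean norm of a vector in ℝ³. -/
def sq3 (v : Fin 3 → ℝ) : ℝ := (v 0)^2 + (v 1)^2 + (v 2)^2

/-- The Lorentz factor γ = 1/√(1 − |v|²). -/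
noncomputable def gam (v : Fin 3 → ℝ) : ℝ := 1 / Real.sqrt (1 - sq3 v)

/-- Build a 4×4 matrix from blocks of sizes 1 and 3. -/
def blk4 (a : Matrix (Fin 1) (Fin 1) ℝ) (b : Matrix (Fin 1) (Fin 3) ℝ)
    (c : Matrix (Fin 3) (Fin 1) ℝ) (d : Matrix (Fin 3) (Fin 3) ℝ) :
    Matrix (Fin 4) (Fin 4) ℝ :=
  Matrix.reindex finSumFinEquiv finSumFinEquiv (Matrix.fromBlocks a b c d)

/-- The 4×4 matrix with top-left block ε₁γ, top-right block ε₁γ·vᵀO,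
bottom-left block ε₂γ·v, and bottom-right block ε₂·(I₃ + (γ²/(1+γ))·v vᵀ)·O. -/
noncomputable def lorentzForm (e1 e2 : ℝ) (v : Fin 3 → ℝ) (O : Matrix (Fin 3) (Fin 3) ℝ) :
    Matrix (Fin 4) (Fin 4) ℝ :=
  blk4 (Matrix.of fun _ _ => e1 * gam v)
       (Matrix.of fun _ j => e1 * gam v * Matrix.vecMul v O j)
       (Matrix.of fun i _ => e2 * gam v * v i)
       (e2 • ((1 + (gam v ^ 2 / (1 + gam v)) • Matrix.vecMulVec v v) * O))

open scoped Classical in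
/-- ε₁ = 1 if A is orthochronous, −1 otherwise. -/
noncomputable def eps1 (A : Matrix (Fin 4) (Fin 4) ℝ) : ℝ :=
  if IsOrthochronous A then 1 else -1

open scoped Classical in
/-- ε₂ = −1 if exactly one of "proper" and "orthochronous" holds, 1 otherwise. -/
noncomputable def eps2 (A : Matrix (Fin 4) (Fin 4) ℝ) : ℝ :=
  if (IsProper A ∧ ¬ IsOrthochronous A) ∨ (¬ IsProper A ∧ IsOrthochronous A) then -1 else 1

namespace LorentzAuxPf
open Matrix

noncomputable section
def eta : Matrix (Fin 4) (Fin 4) ℝ := Matrix.diagonal ![-1,1,1,1]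

lemma eta_mul_self : eta * eta = 1 := by
  ext i j
  fin_cases i <;> fin_cases j <;>
    simp [eta, Matrix.mul_apply, Fin.sum_univ_four, Matrix.diagonal, Matrix.one_apply]

lemma det_eta : eta.det = -1 := by
  simp [eta, Matrix.det_diagonal, Fin.prod_univ_four]

lemma polar {A : Matrix (Fin 4) (Fin 4) ℝ} (hA : IsLorentz A) (x y : Fin 4 → ℝ) :
    (A.mulVec x 1)*(A.mulVec y 1) + (A.mulVec x 2)*(A.mulVec y 2)
      + (A.mulVec x 3)*(A.mulVec y 3) - (A.mulVec x 0)*(A.mulVec y 0)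
    = x 1 * y 1 + x 2 * y 2 + x 3 * y 3 - x 0 * y 0 := by
  have h1 := hA x
  have h2 := hA y
  have h3 := hA (x + y)
  simp only [mink, Matrix.mulVec_add, Pi.add_apply] at h1 h2 h3
  ring_nf at h1 h2 h3 ⊢
  linarith

lemma lorentz_col {A : Matrix (Fin 4) (Fin 4) ℝ} (hA : IsLorentz A) :
    Aᵀ * eta * A = eta := by
  ext i j
  have h := polar hA (Pi.single i 1) (Pi.single j 1)
  simp only [Matrix.mulVec_single, mul_one] at h
  fin_cases i <;> fin_cases j <;>
    simp_all [eta, Matrix.mul_apply, Fin.sum_univ_four, Matrix.diagonal,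
      Matrix.transpose_apply, Pi.single_apply] <;> linarith

lemma lorentz_inv {A : Matrix (Fin 4) (Fin 4) ℝ} (hA : IsLorentz A) :
    (eta * Aᵀ * eta) * A = 1 := by
  have hc := lorentz_col hA
  calc (eta * Aᵀ * eta) * A = eta * (Aᵀ * eta * A) := by
        simp only [Matrix.mul_assoc]
    _ = 1 := by rw [hc, eta_mul_self]

lemma lorentz_row {A : Matrix (Fin 4) (Fin 4) ℝ} (hA : IsLorentz A) :
    A * eta * Aᵀ = eta := by
  have h2 : A * (eta * Aᵀ * eta) = 1 := mul_eq_one_comm.mp (lorentz_inv hA)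
  calc A * eta * Aᵀ = (A * (eta * Aᵀ * eta)) * eta := by
        simp only [Matrix.mul_assoc, eta_mul_self, Matrix.mul_one]
    _ = eta := by rw [h2, Matrix.one_mul]

lemma det_sq {A : Matrix (Fin 4) (Fin 4) ℝ} (hA : IsLorentz A) : A.det ^ 2 = 1 := by
  have := congrArg Matrix.det (lorentz_col hA)
  rw [Matrix.det_mul, Matrix.det_mul, Matrix.det_transpose, det_eta] at this
  nlinarith [this]

lemma detD_eq {A : Matrix (Fin 4) (Fin 4) ℝ} (hA : IsLorentz A) :
    (A.submatrix Fin.succ Fin.succ).det = A.det * A 0 0 := by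
  have h1 := lorentz_inv hA
  have hadj : A.adjugate = A.det • (eta * Aᵀ * eta) := by
    calc A.adjugate = A.adjugate * A * (eta * Aᵀ * eta) := by
          rw [Matrix.mul_assoc, mul_eq_one_comm.mp h1, Matrix.mul_one]
      _ = A.det • (eta * Aᵀ * eta) := by
          rw [Matrix.adjugate_mul, Matrix.smul_mul, Matrix.one_mul]
  have h00 : A.adjugate 0 0 = A.det * A 0 0 := by
    rw [hadj]
    simp [eta, Matrix.mul_apply, Fin.sum_univ_four, Matrix.diagonal, Matrix.transpose_apply]
  rw [← h00, Matrix.adjugate_apply]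
  conv_rhs => rw [Matrix.det_succ_row_zero]
  simp [Matrix.updateRow_apply, Pi.single_apply, Fin.sum_univ_succ, Fin.succAbove_zero]
  congr 1


lemma col_rel {A : Matrix (Fin 4) (Fin 4) ℝ} (hA : IsLorentz A) (i j : Fin 4) :
    A 1 i * A 1 j + A 2 i * A 2 j + A 3 i * A 3 j - A 0 i * A 0 j
      = if i = j then (if i = 0 then -1 else 1) else 0 := by
  have h := polar hA (Pi.single i 1) (Pi.single j 1)
  simp only [Matrix.mulVec_single_one, Matrix.col_apply] at h
  rw [h]
  by_cases hij : i = j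
  · subst hij; fin_cases i <;> simp [Pi.single_apply]
  · fin_cases i <;> fin_cases j <;> simp_all [Pi.single_apply]

lemma row_rel {A : Matrix (Fin 4) (Fin 4) ℝ} (hA : IsLorentz A) (i j : Fin 4) :
    A i 1 * A j 1 + A i 2 * A j 2 + A i 3 * A j 3 - A i 0 * A j 0
      = if i = j then (if i = 0 then -1 else 1) else 0 := by
  have h2 : (A * eta * Aᵀ) i j = eta i j := by rw [lorentz_row hA]
  simp only [eta, Matrix.mul_apply, Fin.sum_univ_four, Matrix.diagonal_apply,
    Matrix.transpose_apply, Matrix.diagonal] at h2 ⊢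
  by_cases hij : i = j
  · subst hij; fin_cases i <;> simp_all <;> linarith
  · fin_cases i <;> fin_cases j <;> simp_all <;> linarith

lemma ortho_iff {A : Matrix (Fin 4) (Fin 4) ℝ} (hA : IsLorentz A) :
    IsOrthochronous A ↔ 0 < A 0 0 := by
  constructor
  · intro h
    have h2 := h ![1,0,0,0] (by show (0:ℝ)^2 + 0^2 + 0^2 < 1^2; norm_num)
    simp [Matrix.mulVec, dotProduct, Fin.sum_univ_four] at h2
    rcases lt_trichotomy (A 0 0) 0 with h'|h'|h'
    · rw [Real.sign_of_neg h'] at h2; norm_num at h2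
    · rw [h', Real.sign_zero] at h2; norm_num at h2
    · exact h'
  · intro ha x hx
    have hb := row_rel hA 0 0
    simp at hb
    have hmv : A.mulVec x 0 = A 0 0 * x 0 + (A 0 1 * x 1 + A 0 2 * x 2 + A 0 3 * x 3) := by
      simp [Matrix.mulVec, dotProduct, Fin.sum_univ_four]; ring
    have hCS : (A 0 1 * x 1 + A 0 2 * x 2 + A 0 3 * x 3)^2
        ≤ ((A 0 1)^2 + (A 0 2)^2 + (A 0 3)^2) * ((x 1)^2 + (x 2)^2 + (x 3)^2) := by
      nlinarith [sq_nonneg (A 0 1 * x 2 - A 0 2 * x 1), sq_nonneg (A 0 1 * x 3 - A 0 3 * x 1),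
        sq_nonneg (A 0 2 * x 3 - A 0 3 * x 2)]
    have hX : 0 ≤ (x 1)^2 + (x 2)^2 + (x 3)^2 := by positivity
    have hs2 : (A 0 1 * x 1 + A 0 2 * x 2 + A 0 3 * x 3)^2 < (A 0 0)^2 * (x 0)^2 := by
      nlinarith [hCS, hb, hx, hX]
    rcases lt_trichotomy (x 0) 0 with h'|h'|h'
    · have hneg : A.mulVec x 0 < 0 := by
        rw [hmv]; nlinarith [mul_pos ha (neg_pos.mpr h'), hs2]
      rw [Real.sign_of_neg hneg, Real.sign_of_neg h']
    · exfalso; rw [h'] at hx; nlinarith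
    · have hpos : 0 < A.mulVec x 0 := by rw [hmv]; nlinarith [mul_pos ha h', hs2]
      rw [Real.sign_of_pos hpos, Real.sign_of_pos h']


lemma blk4_00 (a b c d) : blk4 a b c d 0 0 = a 0 0 := rfl
lemma blk4_0s (a b c d) (j : Fin 3) : blk4 a b c d 0 j.succ = b 0 j := by
  fin_cases j <;> rfl
lemma blk4_s0 (a b c d) (i : Fin 3) : blk4 a b c d i.succ 0 = c i 0 := by
  fin_cases i <;> rfl
lemma blk4_ss (a b c d) (i j : Fin 3) : blk4 a b c d i.succ j.succ = d i j := by
  fin_cases i <;> fin_cases j <;> rfl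

lemma vmv_mul_vmv (u v w x : Fin 3 → ℝ) :
    vecMulVec u v * vecMulVec w x = (v ⬝ᵥ w) • vecMulVec u x := by
  ext i j
  simp [Matrix.mul_apply, vecMulVec_apply, dotProduct, Fin.sum_univ_three]
  ring
lemma mul_vmv (M : Matrix (Fin 3) (Fin 3) ℝ) (u v : Fin 3 → ℝ) :
    M * vecMulVec u v = vecMulVec (M.mulVec u) v := by
  ext i j
  simp [Matrix.mul_apply, vecMulVec_apply, Matrix.mulVec, dotProduct, Fin.sum_univ_three]
  ring
lemma vmv_mul (u v : Fin 3 → ℝ) (M : Matrix (Fin 3) (Fin 3) ℝ) :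
    vecMulVec u v * M = vecMulVec u (Matrix.vecMul v M) := by
  ext i j
  simp [Matrix.mul_apply, vecMulVec_apply, Matrix.vecMul, dotProduct, Fin.sum_univ_three]
  ring
lemma vmv_transpose (u v : Fin 3 → ℝ) : (vecMulVec u v)ᵀ = vecMulVec v u := by
  ext i j; simp [vecMulVec_apply, mul_comm]
lemma vmv_mulVec (u v w : Fin 3 → ℝ) :
    (vecMulVec u v).mulVec w = (v ⬝ᵥ w) • u := by
  ext i; simp [vecMulVec_apply, Matrix.mulVec, dotProduct, Fin.sum_univ_three]; ring
lemma vmv_smul_left (t : ℝ) (u w : Fin 3 → ℝ) :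
    vecMulVec (t • u) w = t • vecMulVec u w := by
  ext i j; simp [vecMulVec_apply]; ring
lemma vmv_smul_right (t : ℝ) (u w : Fin 3 → ℝ) :
    vecMulVec u (t • w) = t • vecMulVec u w := by
  ext i j; simp [vecMulVec_apply]; ring


lemma vecMul_vmv (u w x : Fin 3 → ℝ) :
    Matrix.vecMul u (vecMulVec w x) = (u ⬝ᵥ w) • x := by
  ext j; simp [Matrix.vecMul, vecMulVec_apply, dotProduct, Fin.sum_univ_three]; ring

lemma lf_00 (e1 e2 : ℝ) (v : Fin 3 → ℝ) (O : Matrix (Fin 3) (Fin 3) ℝ) :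
    lorentzForm e1 e2 v O 0 0 = e1 * gam v := by rw [lorentzForm, blk4_00]; rfl
lemma lf_0s (e1 e2 : ℝ) (v : Fin 3 → ℝ) (O : Matrix (Fin 3) (Fin 3) ℝ) (j : Fin 3) :
    lorentzForm e1 e2 v O 0 j.succ = e1 * gam v * Matrix.vecMul v O j := by
  rw [lorentzForm, blk4_0s]; rfl
lemma lf_s0 (e1 e2 : ℝ) (v : Fin 3 → ℝ) (O : Matrix (Fin 3) (Fin 3) ℝ) (i : Fin 3) :
    lorentzForm e1 e2 v O i.succ 0 = e2 * gam v * v i := by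
  rw [lorentzForm, blk4_s0]; rfl
lemma lf_ss (e1 e2 : ℝ) (v : Fin 3 → ℝ) (O : Matrix (Fin 3) (Fin 3) ℝ) (i j : Fin 3) :
    lorentzForm e1 e2 v O i.succ j.succ
      = ((e2 • ((1 + (gam v ^ 2 / (1 + gam v)) • Matrix.vecMulVec v v) * O) : Matrix (Fin 3) (Fin 3) ℝ)) i j := by
  rw [lorentzForm, blk4_ss]

lemma vecMul_smul_mat (x : Fin 3 → ℝ) (b : ℝ) (M : Matrix (Fin 3) (Fin 3) ℝ) :
    Matrix.vecMul x (b • M) = b • Matrix.vecMul x M := by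
  ext j; simp [Matrix.vecMul, dotProduct, Fin.sum_univ_three, Matrix.smul_apply]; ring

set_option maxHeartbeats 2000000 in
theorem main_decomp (A : Matrix (Fin 4) (Fin 4) ℝ) (hA : IsLorentz A) :
    ∃! p : (Fin 3 → ℝ) × Matrix (Fin 3) (Fin 3) ℝ,
      Real.sqrt (sq3 p.1) < 1 ∧ SO3 p.2 ∧
      A = lorentzForm (eps1 A) (eps2 A) p.1 p.2 := by
  classical
  have hcol := col_rel hA
  have hrow := row_rel hA
  set e1 := eps1 A with he1def
  set e2 := eps2 A with he2def
  have he1sq : e1 * e1 = 1 := by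
    by_cases h : IsOrthochronous A <;> simp [he1def, eps1, h]
  have he2sq : e2 * e2 = 1 := by
    rw [he2def, eps2]; split <;> norm_num
  have he1ne : e1 ≠ 0 := by intro h; rw [h] at he1sq; norm_num at he1sq
  have he2ne : e2 ≠ 0 := by intro h; rw [h] at he2sq; norm_num at he2sq
  -- basic scalar relations
  have hb2 : A 0 1 * A 0 1 + A 0 2 * A 0 2 + A 0 3 * A 0 3 = A 0 0 * A 0 0 - 1 := by
    have := hrow 0 0; simp at this; linarith
  have hc2 : A 1 0 * A 1 0 + A 2 0 * A 2 0 + A 3 0 * A 3 0 = A 0 0 * A 0 0 - 1 := by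
    have := hcol 0 0; simp at this; linarith
  have ha2 : 1 ≤ A 0 0 * A 0 0 := by nlinarith [hb2, sq_nonneg (A 0 1), sq_nonneg (A 0 2), sq_nonneg (A 0 3)]
  set g := e1 * A 0 0 with hgdef
  have hg1 : 1 ≤ g := by
    by_cases h : IsOrthochronous A
    · have hpos := (ortho_iff hA).mp h
      have : e1 = 1 := by simp [he1def, eps1, h]
      rw [hgdef, this, one_mul]; nlinarith
    · have hneg : ¬ 0 < A 0 0 := fun hc => h ((ortho_iff hA).mpr hc)
      push_neg at hneg
      have : e1 = -1 := by simp [he1def, eps1, h]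
      rw [hgdef, this]; nlinarith
  have hg0 : 0 < g := by linarith
  have hgne : g ≠ 0 := ne_of_gt hg0
  have h1g : (1:ℝ) + g ≠ 0 := by positivity
  have ha_eq : A 0 0 = e1 * g := by rw [hgdef, ← mul_assoc, he1sq, one_mul]
  have hg2 : g * g = A 0 0 * A 0 0 := by rw [hgdef]; ring_nf; nlinarith [he1sq]
  -- vectors and blocks
  set bv : Fin 3 → ℝ := fun j => A 0 j.succ with hbvdef
  set cv : Fin 3 → ℝ := fun i => A i.succ 0 with hcvdef
  set Dm : Matrix (Fin 3) (Fin 3) ℝ := A.submatrix Fin.succ Fin.succ with hDmdef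
  have hsu0 : (0:Fin 3).succ = (1:Fin 4) := rfl
  have hsu1 : (1:Fin 3).succ = (2:Fin 4) := rfl
  have hsu2 : (2:Fin 3).succ = (3:Fin 4) := rfl
  have hDtD : Dmᵀ * Dm = 1 + vecMulVec bv bv := by
    ext i j
    have h := hcol i.succ j.succ
    simp only [Fin.succ_inj, Fin.succ_ne_zero, if_false] at h
    simp only [Matrix.mul_apply, Fin.sum_univ_three, Matrix.one_apply, vecMulVec_apply,
      Matrix.add_apply, Matrix.transpose_apply, hDmdef, Matrix.submatrix_apply,
      hsu0, hsu1, hsu2, hbvdef]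
    rcases eq_or_ne i j with rfl | hij
    · simp only [if_pos rfl] at h ⊢; linarith
    · simp only [if_neg hij] at h ⊢; linarith
  have hDDt : Dm * Dmᵀ = 1 + vecMulVec cv cv := by
    ext i j
    have h := hrow i.succ j.succ
    simp only [Fin.succ_inj, Fin.succ_ne_zero, if_false] at h
    simp only [Matrix.mul_apply, Fin.sum_univ_three, Matrix.one_apply, vecMulVec_apply,
      Matrix.add_apply, Matrix.transpose_apply, hDmdef, Matrix.submatrix_apply,
      hsu0, hsu1, hsu2, hcvdef]
    rcases eq_or_ne i j with rfl | hij
    · simp only [if_pos rfl] at h ⊢; linarith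
    · simp only [if_neg hij] at h ⊢; linarith
  have hDtc : Dmᵀ.mulVec cv = (e1 * g) • bv := by
    ext j
    have h := hcol 0 j.succ
    simp only [if_neg (Fin.succ_ne_zero j).symm, if_neg (Ne.symm (Fin.succ_ne_zero j))] at h
    simp only [Matrix.mulVec, dotProduct, Fin.sum_univ_three, Matrix.transpose_apply,
      hDmdef, Matrix.submatrix_apply, hsu0, hsu1, hsu2, hcvdef, hbvdef, Pi.smul_apply,
      smul_eq_mul, ← ha_eq]
    linarith
  have hDb : Dm.mulVec bv = (e1 * g) • cv := by
    ext i
    have h := hrow i.succ 0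
    simp only [if_neg (Ne.symm (Fin.succ_ne_zero i)), if_neg (Fin.succ_ne_zero i)] at h
    simp only [Matrix.mulVec, dotProduct, Fin.sum_univ_three, hDmdef, Matrix.submatrix_apply,
      hsu0, hsu1, hsu2, hcvdef, hbvdef, Pi.smul_apply, smul_eq_mul, ← ha_eq]
    linarith
  have hbb : bv ⬝ᵥ bv = g * g - 1 := by
    simp only [dotProduct, Fin.sum_univ_three, hbvdef, hsu0, hsu1, hsu2]
    rw [hg2]; linarith
  have hcc : cv ⬝ᵥ cv = g * g - 1 := by
    simp only [dotProduct, Fin.sum_univ_three, hcvdef, hsu0, hsu1, hsu2]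
    rw [hg2]; linarith
  -- the velocity vector
  set v : Fin 3 → ℝ := fun i => cv i / (e2 * g) with hvdef
  have he2g : e2 * g ≠ 0 := mul_ne_zero he2ne hgne
  have hv_smul : v = (e2 * g)⁻¹ • cv := by
    funext i; simp [hvdef, div_eq_mul_inv, mul_comm]
  have hvv : v ⬝ᵥ v = (g * g - 1) / (g * g) := by
    have : v ⬝ᵥ v = (cv ⬝ᵥ cv) / ((e2 * g) * (e2 * g)) := by
      simp only [dotProduct, Fin.sum_univ_three, hvdef]; field_simp
    rw [this, hcc]
    rw [show (e2 * g) * (e2 * g) = (e2 * e2) * (g * g) by ring, he2sq, one_mul]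
  have hsq3v : sq3 v = v ⬝ᵥ v := by
    simp only [sq3, dotProduct, Fin.sum_univ_three]; ring
  have hsq3lt : sq3 v < 1 := by
    rw [hsq3v, hvv]; rw [div_lt_one (mul_pos hg0 hg0)]; linarith
  have hsq3nn : 0 ≤ sq3 v := by
    rw [hsq3v]; simp only [dotProduct, Fin.sum_univ_three]
    nlinarith [mul_self_nonneg (v 0), mul_self_nonneg (v 1), mul_self_nonneg (v 2)]
  have hsrt : Real.sqrt (sq3 v) < 1 := by
    have h := Real.sqrt_lt_sqrt hsq3nn hsq3lt
    simpa using h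
  have hgam : gam v = g := by
    have h1 : 1 - sq3 v = (1/g) * (1/g) := by rw [hsq3v, hvv]; field_simp; ring
    rw [gam, h1, Real.sqrt_mul_self (by positivity)]
    field_simp
  -- the matrices
  set Vm : Matrix (Fin 3) (Fin 3) ℝ := vecMulVec v v with hVmdef
  set Nn : Matrix (Fin 3) (Fin 3) ℝ := 1 - (g / (1 + g)) • Vm with hNndef
  set Mm : Matrix (Fin 3) (Fin 3) ℝ := 1 + (g ^ 2 / (1 + g)) • Vm with hMmdef
  have hVV : Vm * Vm = ((g * g - 1) / (g * g)) • Vm := by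
    rw [hVmdef, vmv_mul_vmv, hvv]
  have hNN : Nn * Nn = 1 - Vm := by
    rw [hNndef]
    simp only [sub_mul, mul_sub, Matrix.smul_mul, Matrix.mul_smul, one_mul, mul_one, smul_smul]
    rw [hVV, smul_smul]
    match_scalars <;> field_simp <;> ring
  have hMN : Mm * Nn = 1 := by
    rw [hMmdef, hNndef]
    simp only [add_mul, mul_sub, sub_mul, mul_add, add_sub_assoc, Matrix.smul_mul,
      Matrix.mul_smul, one_mul, mul_one, smul_smul]
    rw [hVV, smul_smul]
    match_scalars <;> field_simp <;> ring
  have hNM : Nn * Mm = 1 := mul_eq_one_comm.mp hMN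
  set O : Matrix (Fin 3) (Fin 3) ℝ := e2 • (Nn * Dm) with hOdef
  have hNt : Nnᵀ = Nn := by
    rw [hNndef, Matrix.transpose_sub, Matrix.transpose_smul, Matrix.transpose_one,
      hVmdef, vmv_transpose]
  have hDtv : Dmᵀ.mulVec v = (e1 * e2) • bv := by
    rw [hv_smul, Matrix.mulVec_smul, hDtc, smul_smul]
    congr 1
    rw [mul_inv, inv_eq_of_mul_eq_one_left he2sq]
    field_simp
  have hvD : Matrix.vecMul v Dm = (e1 * e2) • bv := by
    rw [← hDtv]
    ext j
    simp [Matrix.vecMul, Matrix.mulVec, dotProduct, Fin.sum_univ_three, Matrix.transpose_apply]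
    ring
  -- orthogonality of O
  have hOtO : Oᵀ * O = 1 := by
    rw [hOdef, Matrix.transpose_smul, Matrix.transpose_mul, hNt]
    rw [Matrix.smul_mul, Matrix.mul_smul, smul_smul, he2sq, one_smul]
    calc Dmᵀ * Nn * (Nn * Dm) = Dmᵀ * (Nn * Nn) * Dm := by
          simp only [Matrix.mul_assoc]
      _ = Dmᵀ * (1 - Vm) * Dm := by rw [hNN]
      _ = Dmᵀ * Dm - Dmᵀ * Vm * Dm := by
          rw [Matrix.mul_sub, Matrix.mul_one, Matrix.sub_mul]
      _ = 1 := by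
          rw [hDtD, hVmdef, mul_vmv, vmv_mul, hDtv, hvD,
            vmv_smul_left, vmv_smul_right, smul_smul,
            show (e1 * e2) * (e1 * e2) = (e1 * e1) * (e2 * e2) by ring,
            he1sq, he2sq, one_mul, one_smul]
          abel
  -- determinant of O
  have hdetNval : Nn.det = 1 - (g / (1 + g)) * (v ⬝ᵥ v) := by
    rw [hNndef, hVmdef]
    norm_num [Matrix.det_fin_three, Matrix.sub_apply, Matrix.smul_apply, Matrix.one_apply,
      vecMulVec_apply, dotProduct, Fin.sum_univ_three, smul_eq_mul, Fin.ext_iff]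
    ring
  have hdetN : Nn.det = 1 / g := by
    rw [hdetNval, hvv]; field_simp; ring
  have hdetD : Dm.det = A.det * (e1 * g) := by rw [hDmdef, detD_eq hA, ha_eq]
  have hdetA : e1 * e2 * A.det = 1 := by
    have hsq := det_sq hA
    have hval : A.det = 1 ∨ A.det = -1 := by
      have h0 : (A.det - 1) * (A.det + 1) = 0 := by nlinarith
      rcases mul_eq_zero.mp h0 with h | h
      · left; linarith
      · right; linarith
    have hdetval : A.det = if IsProper A then 1 else -1 := by
      split
      · rcases hval with h | h
        · exact h
        · exfalso; have : (0:ℝ) < A.det := ‹IsProper A›; rw [h] at this; linarith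
      · rcases hval with h | h
        · exfalso; exact ‹¬ IsProper A› (by rw [IsProper, h]; norm_num)
        · exact h
    by_cases hP : IsProper A <;> by_cases hO : IsOrthochronous A <;>
      simp [he1def, he2def, eps1, eps2, hP, hO, hdetval] <;> norm_num
  have hdetO : O.det = 1 := by
    rw [hOdef, Matrix.det_smul, Matrix.det_mul, hdetN, hdetD, Fintype.card_fin]
    have h3 : e2 ^ 3 = e2 := by
      calc e2 ^ 3 = (e2 * e2) * e2 := by ring
        _ = e2 := by rw [he2sq, one_mul]
    rw [h3]
    field_simp
    calc e2 * A.det * e1 = (e1 * e2 * A.det) := by ring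
      _ = 1 := hdetA
  -- the top-right identity
  have hvN : Matrix.vecMul v Nn = g⁻¹ • v := by
    rw [hNndef, Matrix.vecMul_sub, Matrix.vecMul_one, vecMul_smul_mat, hVmdef,
      vecMul_vmv, hvv, smul_smul]
    rw [show v - (g / (1 + g) * ((g * g - 1) / (g * g))) • v
        = (1 - g / (1 + g) * ((g * g - 1) / (g * g))) • v by
      rw [sub_smul, one_smul]]
    congr 1
    field_simp
    ring
  have hvO : Matrix.vecMul v O = (e1 * g⁻¹) • bv := by
    rw [hOdef, vecMul_smul_mat, ← Matrix.vecMul_vecMul, hvN, Matrix.smul_vecMul, hvD,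
      smul_smul, smul_smul]
    congr 1
    calc e2 * g⁻¹ * (e1 * e2) = (e2 * e2) * e1 * g⁻¹ := by ring
      _ = e1 * g⁻¹ := by rw [he2sq, one_mul]
  -- the bottom-right identity
  have hMO : e2 • (Mm * O) = Dm := by
    rw [hOdef, Matrix.mul_smul, ← Matrix.mul_assoc, hMN, Matrix.one_mul, smul_smul,
      he2sq, one_smul]
  -- existence
  refine ⟨⟨v, O⟩, ⟨hsrt, ⟨hOtO, hdetO⟩, ?_⟩, ?_⟩
  · ext i j
    rcases Fin.eq_zero_or_eq_succ i with rfl | ⟨i', rfl⟩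
    · rcases Fin.eq_zero_or_eq_succ j with rfl | ⟨j', rfl⟩
      · rw [lf_00, hgam]; exact ha_eq
      · rw [lf_0s, hgam, hvO]
        simp only [Pi.smul_apply, smul_eq_mul]
        rw [show e1 * g * (e1 * g⁻¹ * bv j') = (e1 * e1) * (g * g⁻¹) * bv j' by ring,
          he1sq, mul_inv_cancel₀ hgne, one_mul, one_mul]
    · rcases Fin.eq_zero_or_eq_succ j with rfl | ⟨j', rfl⟩
      · rw [lf_s0, hgam]
        show A i'.succ 0 = e2 * g * (A i'.succ 0 / (e2 * g))
        field_simp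
      · rw [lf_ss, hgam]
        rw [show (1 + (g ^ 2 / (1 + g)) • vecMulVec v v : Matrix (Fin 3) (Fin 3) ℝ) = Mm by
          rw [hMmdef, hVmdef]]
        rw [hMO]
        rfl
  -- uniqueness
  · rintro ⟨w, P⟩ ⟨hw1, ⟨hPo, hPd⟩, hform⟩
    have hent : ∀ i j, A i j = lorentzForm e1 e2 w P i j := fun i j => by rw [← hform]
    have hgw : gam w = g := by
      have h := hent 0 0
      rw [lf_00] at h
      apply mul_left_cancel₀ he1ne
      rw [← h, ha_eq]
    have hwv : w = v := by
      funext i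
      have h := hent i.succ 0
      rw [lf_s0, hgw] at h
      show w i = A i.succ 0 / (e2 * g)
      rw [h]
      field_simp
    subst hwv
    have hDP : Dm = e2 • (Mm * P) := by
      ext i j
      have h := hent i.succ j.succ
      rw [lf_ss, hgw] at h
      rw [show (1 + (g ^ 2 / (1 + g)) • vecMulVec v v : Matrix (Fin 3) (Fin 3) ℝ) = Mm by
        rw [hMmdef, hVmdef]] at h
      exact h
    have hPO : P = O := by
      rw [hOdef, hDP, Matrix.mul_smul, ← Matrix.mul_assoc, hNM, Matrix.one_mul, smul_smul,
        he2sq, one_smul]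
    rw [hPO]

end
end LorentzAuxPf

/-- Any Lorentz transformation can be written uniquely as lorentzForm ε₁(A) ε₂(A) v O
with |v| < 1 and O ∈ SO(3,ℝ). -/
theorem lorentz_decomposition (A : Matrix (Fin 4) (Fin 4) ℝ) (hA : IsLorentz A) :
    ∃! p : (Fin 3 → ℝ) × Matrix (Fin 3) (Fin 3) ℝ,
      Real.sqrt (sq3 p.1) < 1 ∧ SO3 p.2 ∧
      A = lorentzForm (eps1 A) (eps2 A) p.1 p.2 :=
  LorentzAuxPf.main_decomp A hA
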